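/- arXiv:2509.21019 — 2 statements merged into one kernel-verified Lean document; each statement's English description precedes it below -/
import Mathlib

section
/- Let n and N be non-negative integers, and let P be any real trigonometric polynomial of degree at most N such that 𝓑_{n+1}(θ) ≤ P(θ) for every θ ∈ ℝ and ∫_0^1 P(θ) dθ = M_{n+1}/(N+1)^{n+1}. Then for every integer k with 1 ≤ |k| ≤ N, |P̂(k)| ≤ M_{n+1}/(N+1)^{n+1} + (n+1)!/(2π|k|)^{n+1}. -/
open Polynomial

noncomputable section

open scoped Classical

/-- `e(x) = e^{2πix}`. -/
def e2pi (x : ℝ) : ℂ := Complex.exp (2 * Real.pi * Complex.I * x)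

/-- The sawtooth function `𝓑₁`. -/
noncomputable def sawtooth (x : ℝ) : ℝ :=
  if ∃ n : ℤ, x = (n : ℝ) then 0 else x - ⌊x⌋ - 1 / 2

/-- The Bernoulli periodic function `𝓑ₙ`. -/
noncomputable def bernoulliPeriodic (n : ℕ) (x : ℝ) : ℝ :=
  if n = 1 then sawtooth x else bernoulliFun n (Int.fract x)

/-- `Mₙ = max_{x ∈ [0,1]} Bₙ(x)`. -/
def bernoulliMax (n : ℕ) : ℝ := sSup (bernoulliFun n '' Set.Icc (0 : ℝ) 1)

/-- `mₙ = min_{x ∈ [0,1]} Bₙ(x)`. -/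
def bernoulliMin (n : ℕ) : ℝ := sInf (bernoulliFun n '' Set.Icc (0 : ℝ) 1)

/-- A real trigonometric polynomial of degree at most `N`. -/
def IsTrigPoly (N : ℕ) (T : ℝ → ℝ) : Prop :=
  ∃ a : ℤ → ℂ, ∀ θ : ℝ, (T θ : ℂ) = ∑ k ∈ Finset.Icc (-(N : ℤ)) (N : ℤ), a k * e2pi (k * θ)

/-- The `k`-th Fourier coefficient of a `1`-periodic function. -/
def fourierCoeff' (f : ℝ → ℝ) (k : ℤ) : ℂ := ∫ θ in (0:ℝ)..1, (f θ : ℂ) * e2pi (-(k * θ))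

/-- The normalized periodic indicator function of the interval `[α, β]`. -/
noncomputable def periodicIndicator (α β θ : ℝ) : ℝ :=
  if ∃ n : ℤ, θ + (n : ℝ) ∈ Set.Ioo α β then 1
  else if ∃ n : ℤ, θ + (n : ℝ) = α ∨ θ + (n : ℝ) = β then 1 / 2
  else 0

variable (F : Type) [Field F] [Fintype F]

/-- The quadratic residue symbol `(f/P)` modulo a prime polynomial `P`. -/
noncomputable def quadResSymbol (P f : Polynomial F) : ℤ :=
  if P ∣ f then 0 else if ∃ g : Polynomial F, P ∣ (g ^ 2 - f) then 1 else -1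

/-- `χ` is the quadratic character `χ_D`: completely multiplicative on monic polynomials,
with `χ(Q) = (D/Q)` for every prime polynomial `Q`. -/
def IsQuadCharOf (D : Polynomial F) (χ : Polynomial F → ℝ) : Prop :=
  χ 1 = 1 ∧
  (∀ f h : Polynomial F, f.Monic → h.Monic → χ (f * h) = χ f * χ h) ∧
  ∀ Q : Polynomial F, Q.Monic → Irreducible Q → χ Q = (quadResSymbol F Q D : ℝ)

/-- `c_k = ∑_{f monic, deg f = k} χ(f)`. -/
def coeffSum (χ : Polynomial F → ℝ) (k : ℕ) : ℝ :=
  ∑ᶠ f ∈ {f : Polynomial F | f.Monic ∧ f.natDegree = k}, χ f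

/-- The von Mangoldt function for monic polynomials. -/
noncomputable def polyVonMangoldt (f : Polynomial F) : ℝ :=
  if h : ∃ P : Polynomial F, (P.Monic ∧ Irreducible P) ∧ ∃ m : ℕ, 1 ≤ m ∧ f = P ^ m
  then ((Classical.choose h).natDegree : ℝ) else 0

/-- The factorization of `𝓛(u, χ_D) = ∑ c_k u^k` over its zeros `q^{-1/2} e(θⱼ)`. -/
def LFactorization (χ : Polynomial F → ℝ) (g : ℕ) (θz : Fin (2 * g) → ℝ) : Prop :=
  ∀ u : ℂ, ‖u‖ < 1 / (Fintype.card F : ℝ) →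
    HasSum (fun k : ℕ => (coeffSum F χ k : ℂ) * u ^ k)
      (∏ j : Fin (2 * g), (1 - u * (Real.sqrt (Fintype.card F) : ℂ) * e2pi (-(θz j))))


lemma norm_e2pi (x : ℝ) : ‖e2pi x‖ = 1 := by
  simp [e2pi, Complex.norm_exp, Complex.mul_re, Complex.mul_im]

lemma cont_e2pi (k : ℤ) : Continuous (fun θ : ℝ => e2pi (-(k * θ))) := by
  unfold e2pi; fun_prop

lemma bernoulliFun_one' (x : ℝ) : bernoulliFun 1 x = x - 1/2 := by
  simp [bernoulliFun, Polynomial.bernoulli, Finset.sum_range_succ]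
  norm_num [_root_.bernoulli]; ring

lemma bper_eq (n : ℕ) (x : ℝ) (hx : x ∈ Set.Ioo (0:ℝ) 1) :
    bernoulliPeriodic (n+1) x = bernoulliFun (n+1) x := by
  have hfract : Int.fract x = x := Int.fract_eq_self.2 ⟨hx.1.le, hx.2⟩
  rcases Nat.eq_zero_or_pos n with rfl | hn
  · simp only [bernoulliPeriodic, if_pos rfl, sawtooth]
    have hnot : ¬ ∃ m : ℤ, x = (m:ℝ) := by
      rintro ⟨m, rfl⟩
      have h0 : (0:ℤ) < m := by exact_mod_cast hx.1
      have h1 : m < 1 := by exact_mod_cast hx.2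
      omega
    rw [if_neg hnot]
    have hfl : ⌊x⌋ = 0 := Int.floor_eq_zero_iff.2 ⟨hx.1.le, hx.2⟩
    rw [hfl]
    norm_num [bernoulliFun_one']
  · rw [bernoulliPeriodic, if_neg (by omega), hfract]

lemma four_bern (m : ℕ) (hm : m ≠ 0) (k : ℤ) :
    fourierCoeff' (bernoulliFun m) k = -(m.factorial) / (2 * Real.pi * Complex.I * k) ^ m := by
  have := bernoulliFourierCoeff_eq hm k
  rw [bernoulliFourierCoeff, fourierCoeffOn_eq_integral] at this
  rw [fourierCoeff']
  rw [← this]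
  norm_num
  congr 1
  funext x
  rw [mul_comm]
  congr 1
  rw [e2pi, ← Complex.exp_conj]
  congr 1
  push_cast
  simp [Complex.conj_I, Complex.conj_ofReal, map_ofNat]
  ring

/-- Fourier coefficient bound for any extremal majorant of `𝓑_{n+1}`. -/
theorem statement10 (n N : ℕ) (P : ℝ → ℝ) (hP : IsTrigPoly N P)
    (hmaj : ∀ θ : ℝ, bernoulliPeriodic (n + 1) θ ≤ P θ)
    (hint : (∫ θ in (0:ℝ)..1, P θ) = bernoulliMax (n + 1) / (N + 1) ^ (n + 1)) :
    ∀ k : ℤ, 1 ≤ |k| → |k| ≤ (N : ℤ) →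
      ‖fourierCoeff' P k‖ ≤ bernoulliMax (n + 1) / (N + 1) ^ (n + 1)
        + (Nat.factorial (n + 1) : ℝ) / (2 * Real.pi * |(k : ℝ)|) ^ (n + 1) := by
  intro k hk1 hkN
  -- continuity of P
  have hPc : Continuous P := by
    obtain ⟨a, ha⟩ := hP
    have hc : Continuous (fun θ : ℝ => (∑ j ∈ Finset.Icc (-(N : ℤ)) (N : ℤ), a j * e2pi (j * θ))) := by
      refine continuous_finset_sum _ fun j _ => ?_
      unfold e2pi; fun_prop
    have : P = fun θ => (∑ j ∈ Finset.Icc (-(N : ℤ)) (N : ℤ), a j * e2pi (j * θ)).re := by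
      funext θ; rw [← ha θ, Complex.ofReal_re]
    rw [this]; exact Complex.continuous_re.comp hc
  have hBc : Continuous (bernoulliFun (n+1)) := by
    unfold bernoulliFun; fun_prop
  set B : ℝ → ℝ := bernoulliFun (n+1) with hB
  set c : ℝ := bernoulliMax (n + 1) / (N + 1) ^ (n + 1) with hc
  -- splitting
  have hiP : IntervalIntegrable (fun θ : ℝ => (P θ : ℂ) * e2pi (-(k * θ))) MeasureTheory.volume 0 1 := by
    exact ((Complex.continuous_ofReal.comp hPc).mul (cont_e2pi k)).intervalIntegrable 0 1
  have hiB : IntervalIntegrable (fun θ : ℝ => (B θ : ℂ) * e2pi (-(k * θ))) MeasureTheory.volume 0 1 := by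
    apply Continuous.intervalIntegrable
    exact ((Complex.continuous_ofReal.comp hBc)).mul (cont_e2pi k)
  have hiG : IntervalIntegrable (fun θ : ℝ => ((P θ - B θ : ℝ) : ℂ) * e2pi (-(k * θ))) MeasureTheory.volume 0 1 := by
    apply Continuous.intervalIntegrable
    exact (Complex.continuous_ofReal.comp (hPc.sub hBc)).mul (cont_e2pi k)
  have hsplit : fourierCoeff' P k
      = (∫ θ in (0:ℝ)..1, ((P θ - B θ : ℝ) : ℂ) * e2pi (-(k * θ))) + fourierCoeff' B k := by
    rw [fourierCoeff', fourierCoeff', ← intervalIntegral.integral_add hiG hiB]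
    congr 1; funext θ; push_cast; ring
  -- bound on G part
  have hGnonneg : ∀ x ∈ Set.Ioo (0:ℝ) 1, 0 ≤ P x - B x := by
    intro x hx
    have := hmaj x
    rw [bper_eq n x hx] at this
    linarith
  have hGbound : ‖∫ θ in (0:ℝ)..1, ((P θ - B θ : ℝ) : ℂ) * e2pi (-(k * θ))‖ ≤ c := by
    have h1 : ‖∫ θ in (0:ℝ)..1, ((P θ - B θ : ℝ) : ℂ) * e2pi (-(k * θ))‖
        ≤ ∫ θ in (0:ℝ)..1, ‖((P θ - B θ : ℝ) : ℂ) * e2pi (-(k * θ))‖ :=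
      intervalIntegral.norm_integral_le_integral_norm zero_le_one
    have h2 : (∫ θ in (0:ℝ)..1, ‖((P θ - B θ : ℝ) : ℂ) * e2pi (-(k * θ))‖)
        = ∫ θ in (0:ℝ)..1, (P θ - B θ) := by
      apply intervalIntegral.integral_congr_ae
      have hone : ∀ᵐ x : ℝ, x ≠ (1:ℝ) := by
        refine MeasureTheory.ae_iff.2 ?_
        simpa using Real.volume_singleton (x := (1:ℝ))
      filter_upwards [hone] with x hx hmem
      rw [Set.uIoc_of_le zero_le_one] at hmem
      have hx' : x ∈ Set.Ioo (0:ℝ) 1 := ⟨hmem.1, lt_of_le_of_ne hmem.2 hx⟩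
      rw [norm_mul, norm_e2pi, mul_one, Complex.norm_real, Real.norm_eq_abs,
        abs_of_nonneg (hGnonneg x hx')]
    have h3 : (∫ θ in (0:ℝ)..1, (P θ - B θ)) = c := by
      rw [intervalIntegral.integral_sub (hPc.intervalIntegrable 0 1) (hBc.intervalIntegrable 0 1),
        hint, hB, integral_bernoulliFun_eq_zero (by omega), sub_zero]
    rw [h2, h3] at h1; exact h1
  -- bound on B part
  have hBpart : ‖fourierCoeff' B k‖
      = (Nat.factorial (n + 1) : ℝ) / (2 * Real.pi * |(k : ℝ)|) ^ (n + 1) := by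
    rw [hB, four_bern (n+1) (by omega) k]
    rw [norm_div, norm_neg, norm_pow]
    have h4 : ‖(2 : ℂ) * (Real.pi : ℂ) * Complex.I * (k : ℂ)‖ = 2 * Real.pi * |(k:ℝ)| := by
      simp [norm_mul, Complex.norm_real, Real.norm_eq_abs, abs_of_pos Real.pi_pos]
    rw [h4]
    norm_num
  calc ‖fourierCoeff' P k‖
      ≤ ‖∫ θ in (0:ℝ)..1, ((P θ - B θ : ℝ) : ℂ) * e2pi (-(k * θ))‖ + ‖fourierCoeff' B k‖ := by
        rw [hsplit]; exact norm_add_le _ _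
    _ ≤ c + (Nat.factorial (n + 1) : ℝ) / (2 * Real.pi * |(k : ℝ)|) ^ (n + 1) := by
        rw [hBpart]; exact add_le_add_left hGbound _

end
end

section
/- For every even integer n ≥ 2, writing M_{n+1} := max_{x∈[0,1]} B_{n+1}(x) and m_{n+1} := min_{x∈[0,1]} B_{n+1}(x), one has (π^n/2)·M_{n+1}/(n+1)! < (√2/(π·2^{n+1})) · √((1 − 2^{−n−2})(1 − 2^{−n+1}) ζ(n) ζ(n+2)/(1 − 2^{−n})) and −(π^n/2)·m_{n+1}/(n+1)! < (√2/(π·2^{n+1})) · √((1 − 2^{−n−2})(1 − 2^{−n+1}) ζ(n) ζ(n+2)/(1 − 2^{−n})). -/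
open Polynomial

noncomputable section

open scoped Classical

variable (F : Type) [Field F] [Fintype F]

open Real in
lemma st16_aux_summable {p : ℕ} (hp : 2 ≤ p) : Summable (fun m : ℕ => 1 / (m:ℝ)^p) :=
  Real.summable_one_div_nat_pow.mpr (by omega)

open Real in
lemma st16_zeta_re_ge_one {k : ℕ} (hk : 2 ≤ k) : 1 ≤ (riemannZeta k).re := by
  have h : riemannZeta k = ((∑' m : ℕ, 1 / (m:ℝ)^k : ℝ) : ℂ) := by
    rw [zeta_nat_eq_tsum_of_gt_one (by omega), Complex.ofReal_tsum]
    push_cast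
    ring_nf
  rw [h, Complex.ofReal_re]
  have := Summable.le_tsum (st16_aux_summable hk) 1 (fun i _ => by positivity)
  simpa using this

open Real in
lemma st16_tail_hasSum : HasSum (fun m : ℕ => 1/(((m:ℝ)+2))^2) (π^2/6 - 1) := by
  have h := (hasSum_nat_add_iff' (f := fun n : ℕ => (1:ℝ)/(n:ℝ)^2) 2).mpr hasSum_zeta_two
  simp only [Finset.sum_range_succ, Finset.sum_range_zero] at h
  norm_num at h
  simpa [one_div] using h

open Real in
lemma st16_sum_pow_le {p : ℕ} (hp : 3 ≤ p) :
    ∑' m : ℕ, 1 / (m:ℝ)^p ≤ 1 + (π^2/6 - 1) / 2^(p-2) := by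
  have hsum : Summable (fun m : ℕ => 1 / (m:ℝ)^p) := st16_aux_summable (by omega)
  have hkey := Summable.sum_add_tsum_nat_add 2 hsum
  rw [← hkey]
  have h1 : ∑ i ∈ Finset.range 2, 1 / (i:ℝ)^p = 1 := by
    simp [Finset.sum_range_succ, zero_pow (by omega : p ≠ 0)]
  rw [h1]
  have hterm : ∀ m : ℕ, 1 / ((m:ℝ)+2)^p ≤ (1 / ((m:ℝ)+2)^2) / 2^(p-2) := by
    intro m
    rw [div_div, one_div, one_div]
    apply inv_anti₀ (by positivity)
    calc ((m:ℝ)+2)^2 * 2^(p-2) ≤ ((m:ℝ)+2)^2 * ((m:ℝ)+2)^(p-2) := by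
          apply mul_le_mul_of_nonneg_left _ (by positivity)
          exact pow_le_pow_left₀ (by norm_num) (by linarith [Nat.cast_nonneg (α := ℝ) m]) _
      _ = ((m:ℝ)+2)^p := by rw [← pow_add]; congr 1; omega
  have hsum2 : Summable (fun m : ℕ => 1 / ((m:ℝ)+2)^p) := by
    have : Summable ((fun m : ℕ => 1 / (m:ℝ)^p) ∘ fun x => x + 2) :=
      hsum.comp_injective (add_left_injective 2)
    convert this using 2 with m
    push_cast [Function.comp]
    norm_num
  have hsum3 : Summable (fun m : ℕ => (1 / ((m:ℝ)+2)^2) / 2^(p-2)) :=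
    st16_tail_hasSum.summable.div_const _
  have hle := Summable.tsum_le_tsum hterm hsum2 hsum3
  have h3 : ∑' m : ℕ, (1 / ((m:ℝ)+2)^2) / 2^(p-2) = (π^2/6 - 1) / 2^(p-2) := by
    rw [tsum_div_const, st16_tail_hasSum.tsum_eq]
  rw [h3] at hle
  have h5 : ∑' m : ℕ, 1 / (((m + 2 : ℕ)):ℝ)^p = ∑' m : ℕ, 1 / ((m:ℝ)+2)^p := by
    congr 1; ext m; push_cast; ring
  rw [h5]; linarith

open Real in
open scoped Nat in
lemma st16_bern_abs_le (k : ℕ) (hk : k ≠ 0) {x : ℝ} (hx : x ∈ Set.Icc (0:ℝ) 1) :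
    |bernoulliFun (2*k+1) x| ≤
      2 * ((2*k+1)! : ℝ) / (2*π)^(2*k+1) * ∑' m : ℕ, 1/(m:ℝ)^(2*k+1) := by
  set Z := ∑' m : ℕ, 1/(m:ℝ)^(2*k+1) with hZ
  set f : ℕ → ℝ := fun m => 1 / (m:ℝ)^(2*k+1) * Real.sin (2*π*m*x) with hf
  have hS : HasSum f
      ((-1:ℝ)^(k+1) * (2*π)^(2*k+1) / 2 / (2*k+1)! * bernoulliFun (2*k+1) x) :=
    hasSum_one_div_nat_pow_mul_sin hk hx
  have hZsum : Summable (fun m : ℕ => 1/(m:ℝ)^(2*k+1)) := st16_aux_summable (by omega)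
  have hfb : ∀ m : ℕ, |f m| ≤ 1/(m:ℝ)^(2*k+1) := by
    intro m
    rw [hf, abs_mul, abs_of_nonneg (by positivity : (0:ℝ) ≤ 1/(m:ℝ)^(2*k+1))]
    exact mul_le_of_le_one_right (by positivity) (Real.abs_sin_le_one _)
  have habs_sum : Summable (fun m => |f m|) :=
    hZsum.of_nonneg_of_le (fun m => abs_nonneg _) hfb
  have h1 : |∑' m, f m| ≤ ∑' m, |f m| := by
    simpa [Real.norm_eq_abs] using
      norm_tsum_le_tsum_norm (f := f) (by simpa [Real.norm_eq_abs] using habs_sum)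
  have h2 : ∑' m, |f m| ≤ Z := Summable.tsum_le_tsum hfb habs_sum hZsum
  rw [hS.tsum_eq] at h1
  have hc : |(-1:ℝ)^(k+1) * (2*π)^(2*k+1) / 2 / (2*k+1)! * bernoulliFun (2*k+1) x|
      = (2*π)^(2*k+1) / 2 / (2*k+1)! * |bernoulliFun (2*k+1) x| := by
    rw [abs_mul, abs_div, abs_div, abs_mul, abs_pow, abs_pow, abs_neg, abs_one, one_pow,
      one_mul, abs_of_nonneg (by positivity : (0:ℝ) ≤ 2*π), abs_of_nonneg (by norm_num : (0:ℝ) ≤ 2),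
      abs_of_nonneg (by positivity : (0:ℝ) ≤ ((2*k+1)! : ℝ))]
  rw [hc] at h1
  have hc'pos : (0:ℝ) < (2*π)^(2*k+1) / 2 / (2*k+1)! := by
    have := Real.pi_pos
    positivity
  have hfin : (2*π)^(2*k+1) / 2 / (2*k+1)! * |bernoulliFun (2*k+1) x| ≤ Z := le_trans h1 h2
  rw [show (2:ℝ) * ((2*k+1)! : ℝ) / (2*π)^(2*k+1) * Z
      = Z / ((2*π)^(2*k+1) / 2 / (2*k+1)!) by
    field_simp]
  rw [le_div_iff₀ hc'pos]
  nlinarith [hfin]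

open Real in
open scoped Nat in
lemma st16_K_nonneg (k : ℕ) :
    0 ≤ 2 * ((2*k+1)! : ℝ) / (2*π)^(2*k+1) * ∑' m : ℕ, 1/(m:ℝ)^(2*k+1) := by
  have h1 : (0:ℝ) ≤ ∑' m : ℕ, 1/(m:ℝ)^(2*k+1) := tsum_nonneg (fun m => by positivity)
  have := Real.pi_pos
  have h2 : (0:ℝ) ≤ 2 * ((2*k+1)! : ℝ) / (2*π)^(2*k+1) := by positivity
  exact mul_nonneg h2 h1

open Real in
open scoped Nat in
lemma st16_bernoulliMax_le (k : ℕ) (hk : k ≠ 0) :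
    bernoulliMax (2*k+1) ≤ 2 * ((2*k+1)! : ℝ) / (2*π)^(2*k+1) * ∑' m : ℕ, 1/(m:ℝ)^(2*k+1) := by
  apply Real.sSup_le _ (st16_K_nonneg k)
  rintro y ⟨x, hx, rfl⟩
  exact le_trans (le_abs_self _) (st16_bern_abs_le k hk hx)

open Real in
open scoped Nat in
lemma st16_neg_bernoulliMin_le (k : ℕ) (hk : k ≠ 0) :
    -bernoulliMin (2*k+1) ≤ 2 * ((2*k+1)! : ℝ) / (2*π)^(2*k+1) * ∑' m : ℕ, 1/(m:ℝ)^(2*k+1) := by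
  rw [neg_le]
  apply le_csInf ⟨bernoulliFun (2*k+1) 0,
    Set.mem_image_of_mem _ (by norm_num : (0:ℝ) ∈ Set.Icc (0:ℝ) 1)⟩
  rintro y ⟨x, hx, rfl⟩
  have := (abs_le.mp (st16_bern_abs_le k hk hx)).1
  linarith


set_option maxHeartbeats 3200000 in
/-- for even `n ≥ 2`, the function-field constants `A_n^±` are strictly
smaller than the number-field constants `C_n^±`. -/
theorem statement16 (n : ℕ) (hn : 2 ≤ n) (he : Even n) :
    Real.pi ^ n / 2 * bernoulliMax (n + 1) / (Nat.factorial (n + 1) : ℝ)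
      < Real.sqrt 2 / (Real.pi * 2 ^ (n + 1)) *
          Real.sqrt ((1 - ((2 : ℝ) ^ (n + 2))⁻¹) * (1 - 2 * ((2 : ℝ) ^ n)⁻¹)
            * (riemannZeta n).re * (riemannZeta (n + 2)).re / (1 - ((2 : ℝ) ^ n)⁻¹)) ∧
    -(Real.pi ^ n / 2 * bernoulliMin (n + 1) / (Nat.factorial (n + 1) : ℝ))
      < Real.sqrt 2 / (Real.pi * 2 ^ (n + 1)) *
          Real.sqrt ((1 - ((2 : ℝ) ^ (n + 2))⁻¹) * (1 - 2 * ((2 : ℝ) ^ n)⁻¹)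
            * (riemannZeta n).re * (riemannZeta (n + 2)).re / (1 - ((2 : ℝ) ^ n)⁻¹)) := by
  obtain ⟨k, rfl⟩ := he.two_dvd
  have hk0 : k ≠ 0 := by omega
  have hπ := Real.pi_pos
  obtain ⟨Z, hZdef⟩ : ∃ z, ∑' m : ℕ, 1/(m:ℝ)^(2*k+1) = z := ⟨_, rfl⟩
  have hZ0 : (0:ℝ) ≤ Z := hZdef ▸ tsum_nonneg (fun m => by positivity)
  have hM : bernoulliMax (2*k+1) ≤ 2 * ((Nat.factorial (2*k+1)) : ℝ) / (2*Real.pi)^(2*k+1) * Z := by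
    rw [← hZdef]; exact st16_bernoulliMax_le k hk0
  have hm : -bernoulliMin (2*k+1) ≤ 2 * ((Nat.factorial (2*k+1)) : ℝ) / (2*Real.pi)^(2*k+1) * Z := by
    rw [← hZdef]; exact st16_neg_bernoulliMin_le k hk0
  have hfact : (0:ℝ) < ((Nat.factorial (2*k+1)) : ℝ) := by positivity
  have hstep : ∀ t : ℝ, t ≤ 2 * ((Nat.factorial (2*k+1)) : ℝ) / (2*Real.pi)^(2*k+1) * Z →
      Real.pi^(2*k)/2 * t / ((Nat.factorial (2*k+1)) : ℝ) ≤ Z / (2^(2*k+1) * Real.pi) := by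
    intro t ht
    have hEq : Real.pi^(2*k)/2 * (2 * ((Nat.factorial (2*k+1)) : ℝ) / (2*Real.pi)^(2*k+1) * Z)
          / ((Nat.factorial (2*k+1)) : ℝ)
        = Z / (2^(2*k+1) * Real.pi) := by
      field_simp
      ring
    rw [← hEq]
    gcongr
  obtain ⟨z1, hz1def⟩ : ∃ z, (riemannZeta ((2*k : ℕ) : ℂ)).re = z := ⟨_, rfl⟩
  obtain ⟨z2, hz2def⟩ : ∃ z, (riemannZeta (((2*k : ℕ) : ℂ) + 2)).re = z := ⟨_, rfl⟩
  rw [hz1def, hz2def]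
  have h2k4 : (4:ℝ) ≤ 2^(2*k) := by
    calc (4:ℝ) = 2^2 := by norm_num
    _ ≤ 2^(2*k) := pow_le_pow_right₀ (by norm_num) (by omega)
  have hdpos : (0:ℝ) < 1 - ((2:ℝ)^(2*k))⁻¹ := by
    have h := inv_anti₀ (by norm_num : (0:ℝ) < 4) h2k4
    norm_num at h
    linarith
  have hdle : 1 - ((2:ℝ)^(2*k))⁻¹ ≤ 1 := by
    have : (0:ℝ) ≤ ((2:ℝ)^(2*k))⁻¹ := by positivity
    linarith
  have key : Z < Real.sqrt (2 * ((1 - ((2 : ℝ) ^ (2*k + 2))⁻¹) * (1 - 2 * ((2 : ℝ) ^ (2*k))⁻¹)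
      * z1 * z2 / (1 - ((2 : ℝ) ^ (2*k))⁻¹))) := by
    clear hM hm hstep hfact hn he
    rcases eq_or_ne k 1 with hk1 | hk1
    · subst hk1
      have hz1v : z1 = Real.pi^2/6 := by
        rw [← hz1def, show ((2*1 : ℕ) : ℂ) = 2 by norm_num, riemannZeta_two,
          show ((Real.pi:ℂ)^2/6 : ℂ) = ((Real.pi^2/6 : ℝ) : ℂ) by push_cast; ring,
          Complex.ofReal_re]
      have hz2v : z2 = Real.pi^4/90 := by
        rw [← hz2def, show (((2*1 : ℕ) : ℂ) + 2) = 4 by norm_num, riemannZeta_four,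
          show ((Real.pi:ℂ)^4/90 : ℂ) = ((Real.pi^4/90 : ℝ) : ℂ) by push_cast; ring,
          Complex.ofReal_re]
      have hXval : 2 * ((1 - ((2 : ℝ) ^ (2*1 + 2))⁻¹) * (1 - 2 * ((2 : ℝ) ^ (2*1))⁻¹)
          * z1 * z2 / (1 - ((2 : ℝ) ^ (2*1))⁻¹)) = Real.pi^6/432 := by
        rw [hz1v, hz2v]
        norm_num
        ring
      rw [hXval]
      have hZle : Z ≤ 1 + (Real.pi^2/6 - 1) / 2^(2*1+1-2) := by
        rw [← hZdef]; exact st16_sum_pow_le (by norm_num)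
      rw [Real.lt_sqrt hZ0]
      norm_num at hZle
      have hp2l : Real.pi^2 < 9.93 := by nlinarith [Real.pi_lt_d2]
      have hp2g : (9.86:ℝ) < Real.pi^2 := by nlinarith [Real.pi_gt_d6]
      have hZB : Z ≤ 1.33 := by nlinarith
      have hZsq : Z^2 ≤ 1.33^2 := by nlinarith
      have hp6 : ((9.86:ℝ))^3 < Real.pi^6 := by nlinarith [hp2g, sq_nonneg (Real.pi^2)]
      nlinarith
    · have hk2 : 2 ≤ k := by omega
      have h64 : (64:ℝ) ≤ 2^(2*k+2) := by
        calc (64:ℝ) = 2^6 := by norm_num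
        _ ≤ 2^(2*k+2) := pow_le_pow_right₀ (by norm_num) (by omega)
      have h16 : (16:ℝ) ≤ 2^(2*k) := by
        calc (16:ℝ) = 2^4 := by norm_num
        _ ≤ 2^(2*k) := pow_le_pow_right₀ (by norm_num) (by omega)
      have hA : (63/64 : ℝ) ≤ 1 - ((2:ℝ)^(2*k+2))⁻¹ := by
        have h := inv_anti₀ (by norm_num : (0:ℝ) < 64) h64
        norm_num at h
        linarith
      have hB : (7/8 : ℝ) ≤ 1 - 2 * ((2:ℝ)^(2*k))⁻¹ := by
        have h := inv_anti₀ (by norm_num : (0:ℝ) < 16) h16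
        norm_num at h
        linarith
      have hz1ge : (1:ℝ) ≤ z1 := by
        rw [← hz1def]; exact st16_zeta_re_ge_one (by omega)
      have hz2ge : (1:ℝ) ≤ z2 := by
        rw [← hz2def, show (((2*k : ℕ) : ℂ) + 2) = ((2*k+2 : ℕ) : ℂ) by push_cast; ring]
        exact st16_zeta_re_ge_one (by omega)
      have hAB : (441/512 : ℝ) ≤ (1 - ((2:ℝ)^(2*k+2))⁻¹) * (1 - 2 * ((2:ℝ)^(2*k))⁻¹) := by
        calc (441/512 : ℝ) = (63/64) * (7/8) := by norm_num
        _ ≤ _ := mul_le_mul hA hB (by norm_num) (by linarith)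
      have hz12 : (1:ℝ) * 1 ≤ z1 * z2 := mul_le_mul hz1ge hz2ge (by norm_num) (by linarith)
      have hnum : (441/512 : ℝ) ≤ (1 - ((2:ℝ)^(2*k+2))⁻¹) * (1 - 2 * ((2:ℝ)^(2*k))⁻¹)
          * z1 * z2 := by
        calc (441/512 : ℝ) = (441/512) * ((1:ℝ)*1) := by norm_num
        _ ≤ ((1 - ((2:ℝ)^(2*k+2))⁻¹) * (1 - 2 * ((2:ℝ)^(2*k))⁻¹)) * (z1 * z2) :=
            mul_le_mul hAB hz12 (by norm_num) (by linarith)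
        _ = _ := by ring
      have hXge : (441/256 : ℝ) ≤ 2 * ((1 - ((2 : ℝ) ^ (2*k + 2))⁻¹)
          * (1 - 2 * ((2 : ℝ) ^ (2*k))⁻¹) * z1 * z2 / (1 - ((2 : ℝ) ^ (2*k))⁻¹)) := by
        have hdiv : (1 - ((2:ℝ)^(2*k+2))⁻¹) * (1 - 2 * ((2:ℝ)^(2*k))⁻¹) * z1 * z2
            ≤ (1 - ((2:ℝ)^(2*k+2))⁻¹) * (1 - 2 * ((2:ℝ)^(2*k))⁻¹) * z1 * z2
              / (1 - ((2:ℝ)^(2*k))⁻¹) := by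
          rw [le_div_iff₀ hdpos]
          nlinarith [hnum, hdle, hdpos]
        linarith
      have hZle : Z ≤ 1 + (Real.pi^2/6 - 1) / 2^(2*k+1-2) := by
        rw [← hZdef]; exact st16_sum_pow_le (by omega)
      have hπ6 : (0:ℝ) ≤ Real.pi^2/6 - 1 := by nlinarith [Real.pi_gt_d6]
      have h8 : (8:ℝ) ≤ 2^(2*k+1-2) := by
        calc (8:ℝ) = 2^3 := by norm_num
        _ ≤ 2^(2*k+1-2) := pow_le_pow_right₀ (by norm_num) (by omega)
      have hZ8 : Z ≤ 1 + (Real.pi^2/6 - 1) / 8 := by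
        have : (Real.pi^2/6 - 1) / 2^(2*k+1-2) ≤ (Real.pi^2/6 - 1) / 8 :=
          div_le_div_of_nonneg_left hπ6 (by norm_num) h8
        linarith
      have hZlt : Z < 21/16 := by nlinarith [Real.pi_lt_d2]
      calc Z < 21/16 := hZlt
      _ = Real.sqrt (441/256) := by
          rw [show (441/256:ℝ) = (21/16)^2 by norm_num, Real.sqrt_sq (by norm_num)]
      _ ≤ _ := Real.sqrt_le_sqrt hXge
  have hfinal : Z / (2^(2*k+1) * Real.pi) <
      Real.sqrt 2 / (Real.pi * 2 ^ (2*k + 1)) *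
        Real.sqrt ((1 - ((2 : ℝ) ^ (2*k + 2))⁻¹) * (1 - 2 * ((2 : ℝ) ^ (2*k))⁻¹)
          * z1 * z2 / (1 - ((2 : ℝ) ^ (2*k))⁻¹)) := by
    have hsplit : Real.sqrt 2 / (Real.pi * 2 ^ (2*k + 1)) *
        Real.sqrt ((1 - ((2 : ℝ) ^ (2*k + 2))⁻¹) * (1 - 2 * ((2 : ℝ) ^ (2*k))⁻¹)
          * z1 * z2 / (1 - ((2 : ℝ) ^ (2*k))⁻¹))
        = Real.sqrt (2 * ((1 - ((2 : ℝ) ^ (2*k + 2))⁻¹) * (1 - 2 * ((2 : ℝ) ^ (2*k))⁻¹)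
          * z1 * z2 / (1 - ((2 : ℝ) ^ (2*k))⁻¹))) / (2^(2*k+1) * Real.pi) := by
      rw [Real.sqrt_mul (by norm_num)]
      ring
    rw [hsplit]
    exact (div_lt_div_iff_of_pos_right (by positivity)).mpr key
  constructor
  · exact lt_of_le_of_lt (hstep _ hM) hfinal
  · have hrw : -(Real.pi ^ (2*k) / 2 * bernoulliMin (2*k+1) / ((Nat.factorial (2*k+1)) : ℝ))
        = Real.pi ^ (2*k) / 2 * (-bernoulliMin (2*k+1)) / ((Nat.factorial (2*k+1)) : ℝ) := by
      ring
    rw [hrw]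
    exact lt_of_le_of_lt (hstep _ hm) hfinal
end
end
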